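/- If α is an algebraic number of norm 1 (the product of all conjugates of α over ℚ equals 1) such that ℚ(α + α⁻¹) has degree 2 over ℚ, then ℚ(α) ≠ ℚ(α + α⁻¹). -/

import Mathlib

open Polynomial IntermediateField

theorem stmt2 (α : ℂ) (halg : IsAlgebraic ℚ α)
    (hnorm : (((minpoly ℚ α).map (algebraMap ℚ ℂ)).roots).prod = 1)
    (hdeg : Module.finrank ℚ ℚ⟮α + α⁻¹⟯ = 2) :
    ℚ⟮α⟯ ≠ ℚ⟮α + α⁻¹⟯ := by
  intro h
  have hint := halg.isIntegral
  have hdα : (minpoly ℚ α).natDegree = 2 := by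
    rw [← adjoin.finrank hint, h, hdeg]
  set p := (minpoly ℚ α).map (algebraMap ℚ ℂ) with hp
  have hmo : p.Monic := (minpoly.monic hint).map _
  have hsplits : p.Splits := IsAlgClosed.splits _
  have hdp : p.natDegree = 2 := by
    rw [hp, natDegree_map, hdα]
  have hc0 : p.coeff 0 = 1 := by
    rw [hsplits.coeff_zero_eq_prod_roots_of_monic hmo, hnorm, hdp]
    ring
  have hc2 : p.coeff 2 = 1 := by
    have := hmo.leadingCoeff
    rwa [Polynomial.leadingCoeff, hdp] at this
  have heval : p.eval α = 0 := by
    rw [hp, eval_map, ← aeval_def, minpoly.aeval]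
  rw [eval_eq_sum_range, hdp] at heval
  simp [Finset.sum_range_succ, hc0, hc2] at heval
  -- heval : 1 + p.coeff 1 * α + α ^ 2 = 0
  have hα0 : α ≠ 0 := by
    intro h0
    rw [h0] at heval
    simp at heval
  have key : α + α⁻¹ = -(p.coeff 1) := by
    field_simp
    linear_combination heval
  have hmem : α + α⁻¹ ∈ (⊥ : IntermediateField ℚ ℂ) := by
    rw [IntermediateField.mem_bot, key, hp]
    exact ⟨-(minpoly ℚ α).coeff 1, by simp [coeff_map]⟩
  have : ℚ⟮α + α⁻¹⟯ = ⊥ := adjoin_simple_eq_bot_iff.mpr hmem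
  rw [this] at hdeg
  simp [IntermediateField.finrank_bot] at hdeg
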